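/- Let E be a finite-dimensional real vector space, Λ ⊆ E* a finite set of weights of a diagonalizable representation ρ of A = ℝ^m on a vector space V with weight space decomposition V = ⊕_{α∈Λ} V_α. Suppose K ⊆ V is a closed cone invariant under ρ(A), and u = Σ_α u_α ∈ K with u_λ ≠ 0 for an extremal weight λ ∈ Λ (i.e., there exists a ∈ A with λ(a) > α(a) for all α ≠ λ). Then u_λ ∈ K, so V_λ ∩ K ≠ {0}. -/

import Mathlib

open Real Matrix Filter Topology

/-- Let `ρ` be a diagonalizable representation of `A = ℝ^m` on `V` with weight
space decomposition indexed by `ι` and weights `w i` (via the dot product pairing). If `K`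
is a closed cone invariant under `ρ(A)` and `u = ∑ i, u_ i ∈ K` has nonzero component
`u_ i₀` for an extremal weight `w i₀`, then `u_ i₀ ∈ K`. -/
theorem stmt2 {m : ℕ} {V : Type*} [NormedAddCommGroup V] [NormedSpace ℝ V]
    [FiniteDimensional ℝ V]
    {ι : Type*} [Fintype ι]
    (ρ : (Fin m → ℝ) → (V →ₗ[ℝ] V)) (w : ι → (Fin m → ℝ)) (u_ : ι → V)
    (heig : ∀ (i : ι) (a : Fin m → ℝ), ρ a (u_ i) = Real.exp (w i ⬝ᵥ a) • u_ i)
    (K : Set V) (hKclosed : IsClosed K)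
    (hKcone : ∀ (c : ℝ), 0 < c → ∀ x ∈ K, c • x ∈ K)
    (hKinv : ∀ (a : Fin m → ℝ), ∀ x ∈ K, ρ a x ∈ K)
    (hu : (∑ i, u_ i) ∈ K)
    (i₀ : ι) (hne : u_ i₀ ≠ 0)
    (a : Fin m → ℝ) (hextremal : ∀ i : ι, i ≠ i₀ → w i ⬝ᵥ a < w i₀ ⬝ᵥ a) :
    u_ i₀ ∈ K := by
  classical
  set x : ℕ → V := fun n =>
    Real.exp (-(n : ℝ) * (w i₀ ⬝ᵥ a)) • ρ ((n : ℝ) • a) (∑ i, u_ i) with hx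
  have hxK : ∀ n, x n ∈ K := fun n =>
    hKcone _ (Real.exp_pos _) _ (hKinv _ _ hu)
  have hxeq : ∀ n, x n = ∑ i, Real.exp ((n : ℝ) * (w i ⬝ᵥ a - w i₀ ⬝ᵥ a)) • u_ i := by
    intro n
    rw [hx]
    simp only [map_sum, heig, Finset.smul_sum]
    refine Finset.sum_congr rfl fun i _ => ?_
    rw [smul_smul, ← Real.exp_add, dotProduct_smul, smul_eq_mul]
    ring_nf
  have hlim : Tendsto x atTop (𝓝 (u_ i₀)) := by
    have : Tendsto (fun n : ℕ => ∑ i, Real.exp ((n : ℝ) * (w i ⬝ᵥ a - w i₀ ⬝ᵥ a)) • u_ i)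
        atTop (𝓝 (∑ i, if i = i₀ then u_ i₀ else 0)) := by
      refine tendsto_finset_sum _ fun i _ => ?_
      by_cases h : i = i₀
      · subst h
        simp only [if_pos rfl, sub_self, mul_zero, Real.exp_zero, one_smul]
        exact tendsto_const_nhds
      · simp only [if_neg h]
        have hc : w i ⬝ᵥ a - w i₀ ⬝ᵥ a < 0 := sub_neg.mpr (hextremal i h)
        have h1 : Tendsto (fun n : ℕ => (n : ℝ) * (w i ⬝ᵥ a - w i₀ ⬝ᵥ a)) atTop atBot :=
          (tendsto_natCast_atTop_atTop.atTop_mul_const_of_neg hc)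
        have h2 : Tendsto (fun n : ℕ => Real.exp ((n : ℝ) * (w i ⬝ᵥ a - w i₀ ⬝ᵥ a)))
            atTop (𝓝 0) := Real.tendsto_exp_atBot.comp h1
        simpa using h2.smul_const (u_ i)
    rw [funext hxeq]
    simpa [Finset.sum_ite_eq' Finset.univ i₀ (fun i => u_ i)] using this
  exact hKclosed.mem_of_tendsto hlim (Eventually.of_forall hxK)
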